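/- Fix $\lambda > 1$, $K > 0$, $\eta \in (0,1]$, and let $R > 0$, $\xi \in (0, e^{-R})$ satisfy $R(1 - \xi e^R) \ge K + \lambda^{-\eta} R$. Let $P_m$ be the transfer operator of a full-branch uniformly expanding map with expansion $\lambda$ and distortion constant $K$ as above. Let $\psi_1, \psi_2 : Y \to (0,\infty)$ with $|\psi_j|_{\eta,\ell} \le R$ and $\int_Y \psi_1\,dm = \int_Y \psi_2\,dm$. Define $\psi_j' = P_m\psi_j - \xi \int_Y \psi_j\,dm$. Then: (a) $\psi_j' > 0$ and $|\psi_j'|_{\eta,\ell} \le R$ for $j=1,2$; (b) $P_m\psi_1 - P_m\psi_2 = \psi_1' - \psi_2'$; (c) $\int_Y \psi_1'\,dm = \int_Y \psi_2'\,dm = (1-\xi)\int_Y \psi_1\,dm$. -/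

import Mathlib

open MeasureTheory

lemma exp_convex_bound (s α : ℝ) (hα0 : 0 ≤ α) (hα1 : α ≤ 1) :
    Real.exp (α * s) ≤ α * Real.exp s + (1 - α) := by
  have h := convexOn_exp.2 (Set.mem_univ s) (Set.mem_univ (0:ℝ))
    hα0 (by linarith : (0:ℝ) ≤ 1 - α) (by ring)
  simp only [smul_eq_mul, mul_zero, add_zero, Real.exp_zero, mul_one] at h
  linarith

lemma log_step (Px Py c ξ R R' t : ℝ)
    (hc : 0 < c) (hξ0 : 0 < ξ) (hR : 0 < R) (ht0 : 0 ≤ t)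
    (hα0 : 0 < 1 - ξ * Real.exp R)
    (hR'α : R' ≤ R * (1 - ξ * Real.exp R))
    (hPx : Px ≤ Real.exp (R' * t) * Py)
    (hly : Real.exp (-R) * c ≤ Py)
    (h0x : 0 < Px - ξ * c) (h0y : 0 < Py - ξ * c) :
    Real.log (Px - ξ * c) - Real.log (Py - ξ * c) ≤ R * t := by
  set α := 1 - ξ * Real.exp R with hα
  have heR : 0 < Real.exp R := Real.exp_pos R
  have hα1 : α ≤ 1 := by nlinarith
  have hPy0 : 0 < Py := by nlinarith
  have hs1 : 1 ≤ Real.exp (R * t) := Real.one_le_exp (by positivity)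
  set es := Real.exp (R * t) with hes
  have h4 : Real.exp (R' * t) ≤ Real.exp (α * (R * t)) :=
    Real.exp_le_exp.2 (by nlinarith [mul_le_mul_of_nonneg_right hR'α ht0])
  have hconv : Real.exp (α * (R * t)) ≤ α * es + (1 - α) :=
    exp_convex_bound (R * t) α hα0.le hα1
  have hceR : c ≤ Real.exp R * Py := by
    have h2 := mul_le_mul_of_nonneg_left hly heR.le
    have h3 : Real.exp R * (Real.exp (-R) * c) = c := by
      rw [← mul_assoc, ← Real.exp_add]; simp
    linarith
  have h5 : Real.exp (α * (R * t)) * Py ≤ (α * es + (1 - α)) * Py :=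
    mul_le_mul_of_nonneg_right hconv hPy0.le
  have h4' : Real.exp (R' * t) * Py ≤ Real.exp (α * (R * t)) * Py :=
    mul_le_mul_of_nonneg_right h4 hPy0.le
  have h6 : (ξ * (es - 1)) * c ≤ (ξ * (es - 1)) * (Real.exp R * Py) :=
    mul_le_mul_of_nonneg_left hceR (by nlinarith)
  have hmain : Px - ξ * c ≤ es * (Py - ξ * c) := by nlinarith
  have hlog := Real.log_le_log h0x hmain
  rw [Real.log_mul (by positivity) h0y.ne', hes, Real.log_exp] at hlog
  linarith

lemma coupling_aux {Y : Type*} [MetricSpace Y] [MeasurableSpace Y]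
    (m : Measure Y) [IsProbabilityMeasure m]
    (hdiam : ∀ x y : Y, dist x y ≤ 1)
    {ι : Type*} (A : ι → Set Y)
    (F : Y → Y) (inv : ι → Y → Y)
    (hinv_mem : ∀ i y, inv i y ∈ A i)
    (hinv_right : ∀ i y, F (inv i y) = y)
    (ζ : Y → ℝ) (hζ : ∀ x, 0 < ζ x)
    (Λ K η R ξ : ℝ) (hΛ : 1 < Λ) (hK : 0 < K) (hη : η ∈ Set.Ioc (0:ℝ) 1)
    (hR : 0 < R) (hξ : ξ ∈ Set.Ioo 0 (Real.exp (-R)))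
    (hRξ : K + Λ ^ (-η) * R ≤ R * (1 - ξ * Real.exp R))
    (hexp : ∀ i, ∀ x ∈ A i, ∀ y ∈ A i, Λ * dist x y ≤ dist (F x) (F y))
    (hdist : ∀ i, ∀ x ∈ A i, ∀ y ∈ A i,
      |Real.log (ζ x) - Real.log (ζ y)| ≤ K * dist (F x) (F y) ^ η)
    (ψ : Y → ℝ) (hψ : ∀ x, 0 < ψ x)
    (hψR : ∀ x y : Y, |Real.log (ψ x) - Real.log (ψ y)| ≤ R * dist x y ^ η)
    (hint : Integrable ψ m)
    (P : Y → ℝ)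
    (hP : ∀ y, HasSum (fun i => ζ (inv i y) * ψ (inv i y)) (P y))
    (hPint : Integrable P m)
    (hdual : ∫ y, P y ∂m = ∫ x, ψ x ∂m) :
    (∀ y, 0 < P y - ξ * ∫ x, ψ x ∂m) ∧
    (∀ x y : Y, |Real.log (P x - ξ * ∫ z, ψ z ∂m) -
        Real.log (P y - ξ * ∫ z, ψ z ∂m)| ≤ R * dist x y ^ η) := by
  obtain ⟨hη0, hη1⟩ := hη
  obtain ⟨hξ0, hξR⟩ := hξ
  have hΛ0 : (0:ℝ) < Λ := lt_trans one_pos hΛ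
  set c : ℝ := ∫ x, ψ x ∂m with hc_def
  set R' : ℝ := K + Λ ^ (-η) * R with hR'_def
  clear_value c
  have hΛη : 0 < Λ ^ (-η) := Real.rpow_pos_of_pos hΛ0 _
  have hR'0 : 0 < R' := by positivity
  have hR'R : R' ≤ R := by nlinarith [mul_pos hξ0 (Real.exp_pos R), hRξ]
  -- c > 0
  have hc : 0 < c := by
    rw [hc_def, MeasureTheory.integral_pos_iff_support_of_nonneg
        (fun x => (hψ x).le) hint]
    have : Function.support ψ = Set.univ := by
      ext x; simp [Function.support, (hψ x).ne']
    rw [this, measure_univ]; norm_num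
  -- ratio bound on P
  have hratio : ∀ x y : Y, P x ≤ Real.exp (R' * dist x y ^ η) * P y := by
    intro x y
    refine hasSum_le (fun i => ?_) (hP x) ((hP y).mul_left _)
    set a := inv i x
    set b := inv i y
    have hFa : F a = x := hinv_right i x
    have hFb : F b = y := hinv_right i y
    have hab : Λ * dist a b ≤ dist x y := by
      have := hexp i a (hinv_mem i x) b (hinv_mem i y); rwa [hFa, hFb] at this
    have hdab : dist a b ≤ Λ⁻¹ * dist x y := by
      rw [inv_mul_eq_div, le_div_iff₀ hΛ0]; linarith [hab]
    have h1 : Real.log (ζ a) - Real.log (ζ b) ≤ K * dist x y ^ η := by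
      have := hdist i a (hinv_mem i x) b (hinv_mem i y)
      rw [hFa, hFb] at this
      exact le_trans (le_abs_self _) this
    have h2 : Real.log (ψ a) - Real.log (ψ b) ≤ Λ ^ (-η) * R * dist x y ^ η := by
      have hb1 : Real.log (ψ a) - Real.log (ψ b) ≤ R * dist a b ^ η :=
        le_trans (le_abs_self _) (hψR a b)
      have hb2 : dist a b ^ η ≤ (Λ⁻¹ * dist x y) ^ η :=
        Real.rpow_le_rpow dist_nonneg hdab hη0.le
      have hb3 : (Λ⁻¹ * dist x y) ^ η = Λ ^ (-η) * dist x y ^ η := by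
        rw [Real.mul_rpow (by positivity) dist_nonneg, Real.inv_rpow hΛ0.le,
          ← Real.rpow_neg hΛ0.le]
      calc Real.log (ψ a) - Real.log (ψ b) ≤ R * dist a b ^ η := hb1
        _ ≤ R * ((Λ⁻¹ * dist x y) ^ η) := by
            exact mul_le_mul_of_nonneg_left hb2 hR.le
        _ = Λ ^ (-η) * R * dist x y ^ η := by rw [hb3]; ring
    have hζa := hζ a; have hζb := hζ b; have hψa := hψ a; have hψb := hψ b
    have key : Real.log (ζ a * ψ a) ≤
        R' * dist x y ^ η + Real.log (ζ b * ψ b) := by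
      rw [Real.log_mul hζa.ne' hψa.ne', Real.log_mul hζb.ne' hψb.ne', hR'_def]
      nlinarith [h1, h2]
    have := Real.exp_le_exp.2 key
    rwa [Real.exp_log (by positivity), Real.exp_add,
      Real.exp_log (by positivity)] at this
  -- existence of a point with c ≤ P
  have hex : ∃ y₀, c ≤ P y₀ := by
    by_contra h
    push_neg at h
    have hg : Integrable (fun y => c - P y) m := (integrable_const c).sub hPint
    have hgi : ∫ y, (c - P y) ∂m = 0 := by
      rw [integral_sub (integrable_const c) hPint, hdual, integral_const,
        probReal_univ]
      simp
    have : 0 < ∫ y, (c - P y) ∂m := by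
      rw [MeasureTheory.integral_pos_iff_support_of_nonneg
        (fun y => by simp [sub_nonneg]; exact (h y).le) hg]
      have : Function.support (fun y => c - P y) = Set.univ := by
        ext y; simp [Function.support, sub_ne_zero.2 (h y).ne']
      rw [this, measure_univ]; norm_num
    linarith
  obtain ⟨y₀, hy₀⟩ := hex
  -- lower bound
  have hdη1 : ∀ x y : Y, dist x y ^ η ≤ 1 := fun x y =>
    Real.rpow_le_one dist_nonneg (hdiam x y) hη0.le
  have hdη0 : ∀ x y : Y, 0 ≤ dist x y ^ η := fun x y =>
    Real.rpow_nonneg dist_nonneg _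
  have hlow : ∀ y, Real.exp (-R) * c ≤ P y := by
    intro y
    have h1 := hratio y₀ y
    have h2 : Real.exp (R' * dist y₀ y ^ η) ≤ Real.exp R :=
      Real.exp_le_exp.2 (by nlinarith [hdη1 y₀ y, hdη0 y₀ y])
    have hPy : 0 < P y := by
      by_contra h
      push_neg at h
      nlinarith [Real.exp_pos (R' * dist y₀ y ^ η)]
    have : c ≤ Real.exp R * P y := by nlinarith
    rw [Real.exp_neg]
    rw [inv_mul_le_iff₀ (Real.exp_pos R)]
    linarith
  have hξeR : ξ * Real.exp R < 1 := by
    have := mul_lt_mul_of_pos_right hξR (Real.exp_pos R)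
    rwa [← Real.exp_add, neg_add_cancel, Real.exp_zero] at this
  have hpos : ∀ y, 0 < P y - ξ * c := by
    intro y
    have h1 := hlow y
    have : ξ * c < Real.exp (-R) * c :=
      mul_lt_mul_of_pos_right hξR hc
    linarith
  refine ⟨hpos, ?_⟩
  -- one-sided Hölder bound via log_step
  have oneside : ∀ x y : Y, Real.log (P x - ξ * c) - Real.log (P y - ξ * c)
      ≤ R * dist x y ^ η := fun x y =>
    log_step (P x) (P y) c ξ R R' (dist x y ^ η) hc hξ0 hR (hdη0 x y)
      (by linarith [hξeR]) hRξ (hratio x y) (hlow y) (hpos x) (hpos y)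
  intro x y
  rw [abs_sub_le_iff]
  exact ⟨oneside x y, by rw [dist_comm x y]; exact oneside y x⟩


/-- Coupling lemma (Lemma 3.4): with `R, ξ` satisfying `R(1-ξe^R) ≥ K + λ^{-η}R`,
for `ψ₁, ψ₂ > 0` with `|ψ_j|_{η,ℓ} ≤ R` and equal integrals, the functions
`ψ_j' = P_m ψ_j - ξ ∫ ψ_j dm` are positive with `|ψ_j'|_{η,ℓ} ≤ R`,
`P_m ψ₁ - P_m ψ₂ = ψ₁' - ψ₂'`, and `∫ ψ₁' = ∫ ψ₂' = (1-ξ) ∫ ψ₁`. -/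
theorem coupling_step {Y : Type*} [MetricSpace Y] [MeasurableSpace Y]
    (m : Measure Y) [IsProbabilityMeasure m]
    (hdiam : ∀ x y : Y, dist x y ≤ 1)
    {ι : Type*} [Countable ι] (A : ι → Set Y)
    (F : Y → Y) (inv : ι → Y → Y)
    (hinv_mem : ∀ i y, inv i y ∈ A i)
    (hinv_right : ∀ i y, F (inv i y) = y)
    (hinv_left : ∀ i, ∀ x ∈ A i, inv i (F x) = x)
    (ζ : Y → ℝ) (hζ : ∀ x, 0 < ζ x)
    (Λ K η R ξ : ℝ) (hΛ : 1 < Λ) (hK : 0 < K) (hη : η ∈ Set.Ioc (0:ℝ) 1)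
    (hR : 0 < R) (hξ : ξ ∈ Set.Ioo 0 (Real.exp (-R)))
    (hRξ : K + Λ ^ (-η) * R ≤ R * (1 - ξ * Real.exp R))
    (hexp : ∀ i, ∀ x ∈ A i, ∀ y ∈ A i, Λ * dist x y ≤ dist (F x) (F y))
    (hdist : ∀ i, ∀ x ∈ A i, ∀ y ∈ A i,
      |Real.log (ζ x) - Real.log (ζ y)| ≤ K * dist (F x) (F y) ^ η)
    (ψ₁ ψ₂ : Y → ℝ) (hψ₁ : ∀ x, 0 < ψ₁ x) (hψ₂ : ∀ x, 0 < ψ₂ x)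
    (hψ₁R : ∀ x y : Y, |Real.log (ψ₁ x) - Real.log (ψ₁ y)| ≤ R * dist x y ^ η)
    (hψ₂R : ∀ x y : Y, |Real.log (ψ₂ x) - Real.log (ψ₂ y)| ≤ R * dist x y ^ η)
    (hint₁ : Integrable ψ₁ m) (hint₂ : Integrable ψ₂ m)
    (heq : ∫ x, ψ₁ x ∂m = ∫ x, ψ₂ x ∂m)
    (P₁ P₂ : Y → ℝ)
    (hP₁ : ∀ y, HasSum (fun i => ζ (inv i y) * ψ₁ (inv i y)) (P₁ y))
    (hP₂ : ∀ y, HasSum (fun i => ζ (inv i y) * ψ₂ (inv i y)) (P₂ y))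
    (hPint₁ : Integrable P₁ m) (hPint₂ : Integrable P₂ m)
    (hdual₁ : ∫ y, P₁ y ∂m = ∫ x, ψ₁ x ∂m)
    (hdual₂ : ∫ y, P₂ y ∂m = ∫ x, ψ₂ x ∂m) :
    ((∀ y, 0 < P₁ y - ξ * ∫ x, ψ₁ x ∂m) ∧ (∀ y, 0 < P₂ y - ξ * ∫ x, ψ₂ x ∂m) ∧
      (∀ x y : Y, |Real.log (P₁ x - ξ * ∫ z, ψ₁ z ∂m) -
          Real.log (P₁ y - ξ * ∫ z, ψ₁ z ∂m)| ≤ R * dist x y ^ η) ∧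
      (∀ x y : Y, |Real.log (P₂ x - ξ * ∫ z, ψ₂ z ∂m) -
          Real.log (P₂ y - ξ * ∫ z, ψ₂ z ∂m)| ≤ R * dist x y ^ η)) ∧
    (∀ y, P₁ y - P₂ y =
      (P₁ y - ξ * ∫ x, ψ₁ x ∂m) - (P₂ y - ξ * ∫ x, ψ₂ x ∂m)) ∧
    ((∫ y, (P₁ y - ξ * ∫ x, ψ₁ x ∂m) ∂m = (1 - ξ) * ∫ x, ψ₁ x ∂m) ∧
      (∫ y, (P₂ y - ξ * ∫ x, ψ₂ x ∂m) ∂m = (1 - ξ) * ∫ x, ψ₁ x ∂m)) := by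
  obtain ⟨hpos₁, hhol₁⟩ := coupling_aux m hdiam A F inv hinv_mem hinv_right ζ hζ
    Λ K η R ξ hΛ hK hη hR hξ hRξ hexp hdist ψ₁ hψ₁ hψ₁R hint₁ P₁ hP₁ hPint₁ hdual₁
  obtain ⟨hpos₂, hhol₂⟩ := coupling_aux m hdiam A F inv hinv_mem hinv_right ζ hζ
    Λ K η R ξ hΛ hK hη hR hξ hRξ hexp hdist ψ₂ hψ₂ hψ₂R hint₂ P₂ hP₂ hPint₂ hdual₂
  have hpos₂' : ∀ y, 0 < P₂ y - ξ * ∫ x, ψ₂ x ∂m := hpos₂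
  refine ⟨⟨hpos₁, hpos₂, hhol₁, hhol₂⟩, fun y => by rw [heq]; ring, ?_, ?_⟩
  · rw [integral_sub hPint₁ (integrable_const _), integral_const, probReal_univ,
      hdual₁]
    simp; ring
  · rw [integral_sub hPint₂ (integrable_const _), integral_const, probReal_univ,
      hdual₂, ← heq]
    simp; ring
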